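/- (Linear-bounds corollary.) Suppose l_m ‖x − y‖ ≤ d(x, y) ≤ l_M ‖x − y‖ holds for all x, y ∈ M, where 0 < l_m ≤ l_M. If x* minimizes f_ν over M, x̂* minimizes the function x ↦ (Σ_{i=1}^N ‖x − x_i‖^ν)^{1/ν} over M, and f_ν(x*) > 0, then (f_ν(x̂*) − f_ν(x*)) / f_ν(x*) ≤ l_M / l_m − 1. -/

import Mathlib

open Finset

theorem linear_bounds_corollary {E : Type*} [NormedAddCommGroup E] [NormedSpace ℝ E]
    (M : Set E) (hM : M.Nonempty) {N : ℕ} (hN : 1 ≤ N)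
    (x : Fin N → E) (hx : ∀ i, x i ∈ M) {ν : ℝ} (hν : 1 ≤ ν)
    (d : E → E → ℝ) (hd0 : ∀ a b : E, 0 ≤ d a b)
    {lm lM : ℝ} (hlm : 0 < lm) (hlmM : lm ≤ lM)
    (hd : ∀ a ∈ M, ∀ b ∈ M, lm * ‖a - b‖ ≤ d a b ∧ d a b ≤ lM * ‖a - b‖)
    (f : E → ℝ)
    (hf : ∀ y : E, f y = (∑ i, d y (x i) ^ ν) ^ (1 / ν))
    (xstar : E) (hxstarM : xstar ∈ M)
    (hxstar : ∀ z ∈ M, f xstar ≤ f z)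
    (xhat : E) (hxhatM : xhat ∈ M)
    (hxhat : ∀ z ∈ M, (∑ i, ‖xhat - x i‖ ^ ν) ^ (1 / ν) ≤ (∑ i, ‖z - x i‖ ^ ν) ^ (1 / ν))
    (hfpos : 0 < f xstar) :
    (f xhat - f xstar) / f xstar ≤ lM / lm - 1 := by
  have hν0 : (0:ℝ) < ν := lt_of_lt_of_le one_pos hν
  have hlM : (0:ℝ) < lM := lt_of_lt_of_le hlm hlmM
  set g : E → ℝ := fun y => (∑ i, ‖y - x i‖ ^ ν) ^ (1 / ν) with hg
  have hfactor : ∀ (c : ℝ), 0 ≤ c → ∀ y : E,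
      (∑ i, (c * ‖y - x i‖) ^ ν) ^ (1 / ν) = c * g y := by
    intro c hc y
    have h1 : ∀ i : Fin N, (c * ‖y - x i‖) ^ ν = c ^ ν * ‖y - x i‖ ^ ν := fun i =>
      Real.mul_rpow hc (norm_nonneg _)
    rw [Finset.sum_congr rfl fun i _ => h1 i, ← Finset.mul_sum,
      Real.mul_rpow (Real.rpow_nonneg hc ν)
        (Finset.sum_nonneg fun i _ => Real.rpow_nonneg (norm_nonneg _) _),
      ← Real.rpow_mul hc, mul_one_div_cancel hν0.ne', Real.rpow_one]
  have hupper : ∀ y ∈ M, f y ≤ lM * g y := by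
    intro y hy
    rw [hf, ← hfactor lM hlM.le y]
    apply Real.rpow_le_rpow (Finset.sum_nonneg fun i _ => Real.rpow_nonneg (hd0 _ _) _)
      (Finset.sum_le_sum fun i _ =>
        Real.rpow_le_rpow (hd0 _ _) (hd y hy (x i) (hx i)).2 hν0.le)
      (by positivity)
  have hlower : ∀ y ∈ M, lm * g y ≤ f y := by
    intro y hy
    rw [hf, ← hfactor lm hlm.le y]
    apply Real.rpow_le_rpow
      (Finset.sum_nonneg fun i _ => Real.rpow_nonneg (by positivity) _)
      (Finset.sum_le_sum fun i _ =>
        Real.rpow_le_rpow (by positivity) (hd y hy (x i) (hx i)).1 hν0.le)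
      (by positivity)
  have h1 : f xhat ≤ lM * g xhat := hupper xhat hxhatM
  have h2 : g xhat ≤ g xstar := hxhat xstar hxstarM
  have h3 : lm * g xstar ≤ f xstar := hlower xstar hxstarM
  rw [div_le_iff₀ hfpos, div_sub' hlm.ne', div_mul_eq_mul_div, le_div_iff₀ hlm]
  nlinarith [mul_le_mul_of_nonneg_left h2 hlM.le]
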